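/- Let à ∈ ℝ^{m×p} have full row rank with pseudoinverse Ã⁺ = Ãᵀ(ÃÃᵀ)⁻¹, and let g, h ∈ ℝ^p with Ãg ≤ b̃ componentwise. Define h* = h - Ã⁺·ReLU(Ãh - b̃). Then ‖g - h*‖₂ ≤ (1 + ‖Ã⁺‖₂·‖Ã‖₂)·‖g - h‖₂, where ‖·‖₂ on matrices is the spectral norm. -/

import Mathlib

open Matrix

/-- Componentwise ReLU on vectors. -/
noncomputable def vecReLU {m : ℕ} (v : Fin m → ℝ) : Fin m → ℝ := fun i => max (v i) 0

/-- Euclidean (ℓ²) norm of a vector in `Fin p → ℝ`. -/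
noncomputable def euclNorm {p : ℕ} (v : Fin p → ℝ) : ℝ :=
  ‖(WithLp.equiv 2 (Fin p → ℝ)).symm v‖

/-- Spectral norm (ℓ²→ℓ² operator norm) of a real matrix. -/
noncomputable def specNorm {m p : ℕ} (A : Matrix (Fin m) (Fin p) ℝ) : ℝ :=
  ‖LinearMap.toContinuousLinearMap (Matrix.toEuclideanLin A)‖

lemma euclNorm_mono {p : ℕ} {u v : Fin p → ℝ} (h : ∀ i, |u i| ≤ |v i|) :
    euclNorm u ≤ euclNorm v := by
  simp only [euclNorm, EuclideanSpace.norm_eq]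
  apply Real.sqrt_le_sqrt
  apply Finset.sum_le_sum
  intro i _
  have : ‖u i‖ ≤ ‖v i‖ := h i
  exact pow_le_pow_left₀ (norm_nonneg _) this 2

lemma euclNorm_add_le {p : ℕ} (u v : Fin p → ℝ) :
    euclNorm (u + v) ≤ euclNorm u + euclNorm v := by
  simpa [euclNorm] using norm_add_le ((WithLp.equiv 2 (Fin p → ℝ)).symm u)
    ((WithLp.equiv 2 (Fin p → ℝ)).symm v)

lemma euclNorm_mulVec_le {m p : ℕ} (A : Matrix (Fin m) (Fin p) ℝ) (v : Fin p → ℝ) :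
    euclNorm (A.mulVec v) ≤ specNorm A * euclNorm v := by
  have := (LinearMap.toContinuousLinearMap (Matrix.toEuclideanLin A)).le_opNorm
    ((WithLp.equiv 2 (Fin p → ℝ)).symm v)
  simpa [euclNorm, specNorm, Matrix.toLpLin_toLp] using this

theorem stmt_10 {m p : ℕ} (Atil : Matrix (Fin m) (Fin p) ℝ) (hrank : Atil.rank = m)
    (btil : Fin m → ℝ) (g h : Fin p → ℝ)
    (hg : ∀ i, Atil.mulVec g i ≤ btil i) :
    euclNorm (g - (h - (Atilᵀ * (Atil * Atilᵀ)⁻¹).mulVec (vecReLU (Atil.mulVec h - btil)))) ≤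
      (1 + specNorm (Atilᵀ * (Atil * Atilᵀ)⁻¹) * specNorm Atil) * euclNorm (g - h) := by
  set P := Atilᵀ * (Atil * Atilᵀ)⁻¹
  set r := vecReLU (Atil.mulVec h - btil)
  have key : g - (h - P.mulVec r) = (g - h) + P.mulVec r := by ring_nf
  rw [key]
  have h1 : euclNorm ((g - h) + P.mulVec r) ≤ euclNorm (g - h) + euclNorm (P.mulVec r) :=
    euclNorm_add_le _ _
  have h2 : euclNorm (P.mulVec r) ≤ specNorm P * euclNorm r := euclNorm_mulVec_le _ _
  have h3 : euclNorm r ≤ euclNorm (Atil.mulVec (h - g)) := by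
    apply euclNorm_mono
    intro i
    have hx : Atil.mulVec h i - btil i ≤ Atil.mulVec (h - g) i := by
      have := hg i
      simp [Matrix.mulVec_sub]
      linarith
    have h0 : (0 : ℝ) ≤ max (Atil.mulVec h i - btil i) 0 := le_max_right _ _
    have : r i ≤ |Atil.mulVec (h - g) i| := by
      simp only [r, vecReLU, Pi.sub_apply]
      exact max_le (hx.trans (le_abs_self _)) (abs_nonneg _)
    calc |r i| = r i := abs_of_nonneg h0
      _ ≤ |Atil.mulVec (h - g) i| := this
  have h4 : euclNorm (Atil.mulVec (h - g)) ≤ specNorm Atil * euclNorm (h - g) :=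
    euclNorm_mulVec_le _ _
  have h5 : euclNorm (h - g) = euclNorm (g - h) := by
    have : h - g = -(g - h) := by ring_nf
    rw [this]; simp only [euclNorm]
    rw [show (WithLp.equiv 2 (Fin p → ℝ)).symm (-(g - h)) = -((WithLp.equiv 2 (Fin p → ℝ)).symm (g - h)) from rfl, norm_neg]
  have hPnn : 0 ≤ specNorm P := norm_nonneg _
  have hAnn : 0 ≤ specNorm Atil := norm_nonneg _
  rw [h5] at h4
  nlinarith [mul_le_mul_of_nonneg_left h3 hPnn, mul_le_mul_of_nonneg_left h4 hPnn]
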